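/- arXiv:2602.10141 — 3 statements merged into one kernel-verified Lean document; each statement's English description precedes it below -/
import Mathlib

section
/- Let U be an n×n complex unitary matrix (U U* = I). Then |perm(U)| ≤ 1. -/
open Matrix Finset

namespace PermAux

variable {n : ℕ}

noncomputable def v (U : Matrix (Fin n) (Fin n) ℂ) (f : Fin n → Fin n) : ℂ := ∏ i, U i (f i)

def key (f : Fin n → Fin n) : Multiset (Fin n) := Finset.univ.val.map f

lemma key_comp_perm (f : Fin n → Fin n) (τ : Equiv.Perm (Fin n)) : key (f ∘ τ) = key f := by
  unfold key
  have h : (Finset.univ : Finset (Fin n)).val.map ⇑τ = Finset.univ.val := by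
    have h2 := Finset.map_univ_equiv τ
    calc Finset.univ.val.map ⇑τ = (Finset.univ.map τ.toEmbedding).val := by
          simp [Finset.map]
      _ = Finset.univ.val := by rw [h2]
  calc Finset.univ.val.map (f ∘ ⇑τ) = (Finset.univ.val.map ⇑τ).map f := by
        rw [Multiset.map_map]
    _ = Finset.univ.val.map f := by rw [h]

lemma count_key (f : Fin n → Fin n) (k : Fin n) :
    Multiset.count k (key f) = Fintype.card {x // f x = k} := by
  rw [key, Multiset.count_map, Fintype.card_subtype, Finset.card_def, Finset.filter_val]
  congr 1
  exact Multiset.filter_congr (fun x _ => eq_comm)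

lemma key_eq_iff {f g : Fin n → Fin n} :
    key f = key g ↔ ∃ τ : Equiv.Perm (Fin n), f ∘ τ = g := by
  constructor
  · intro h
    have hc : ∀ k, Fintype.card {x // g x = k} = Fintype.card {x // f x = k} := by
      intro k; rw [← count_key, ← count_key, h]
    let e : (Σ k, {x // g x = k}) ≃ (Σ k, {x // f x = k}) :=
      Equiv.sigmaCongrRight fun k => Fintype.equivOfCardEq (hc k)
    refine ⟨((Equiv.sigmaFiberEquiv g).symm.trans e).trans (Equiv.sigmaFiberEquiv f),
      funext fun x => ?_⟩
    exact ((e ((Equiv.sigmaFiberEquiv g).symm x)).2).2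
  · rintro ⟨τ, rfl⟩
    exact (key_comp_perm f τ).symm

end PermAux

namespace PermAux2
open PermAux

variable {n : ℕ}

def W (f : Fin n → Fin n) : ℕ :=
  (Finset.univ.filter fun τ : Equiv.Perm (Fin n) => f ∘ ⇑τ = f).card

lemma card_fiber {f g : Fin n → Fin n} (τ₀ : Equiv.Perm (Fin n)) (h : f ∘ ⇑τ₀ = g) :
    (Finset.univ.filter fun τ : Equiv.Perm (Fin n) => f ∘ ⇑τ = g).card = W f := by
  unfold W
  apply Finset.card_equiv (Equiv.mulRight τ₀⁻¹)
  intro τ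
  simp only [Finset.mem_filter, Finset.mem_univ, true_and, Equiv.coe_mulRight]
  have hh : ∀ y, f (τ₀ y) = g y := fun y => congrFun h y
  constructor
  · intro hτ
    funext x
    show f (τ (τ₀⁻¹ x)) = f x
    calc f (τ (τ₀⁻¹ x)) = g (τ₀⁻¹ x) := congrFun hτ _
      _ = f (τ₀ (τ₀⁻¹ x)) := (hh _).symm
      _ = f x := by rw [Equiv.Perm.inv_def, Equiv.apply_symm_apply]
  · intro hτ
    funext x
    show f (τ x) = g x
    calc f (τ x) = f (τ (τ₀⁻¹ (τ₀ x))) := by rw [Equiv.Perm.inv_def, Equiv.symm_apply_apply]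
      _ = f (τ₀ x) := congrFun hτ (τ₀ x)
      _ = g x := hh x

lemma W_congr {f g : Fin n → Fin n} (h : key f = key g) : W f = W g := by
  obtain ⟨τ₀, hτ₀⟩ := key_eq_iff.mp h
  have h1 : (Finset.univ.filter fun τ : Equiv.Perm (Fin n) => f ∘ ⇑τ = g).card = W f :=
    card_fiber τ₀ hτ₀
  -- also W g = card of {τ : g ∘ τ = g}; relate via bijection τ ↦ τ₀ * τ
  have h2 : (Finset.univ.filter fun τ : Equiv.Perm (Fin n) => f ∘ ⇑τ = g).card = W g := by
    unfold W
    apply Finset.card_equiv (Equiv.mulLeft τ₀⁻¹)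
    intro τ
    simp only [Finset.mem_filter, Finset.mem_univ, true_and, Equiv.coe_mulLeft]
    have hh : ∀ y, f (τ₀ y) = g y := fun y => congrFun hτ₀ y
    constructor
    · intro hτ
      funext x
      show g (τ₀⁻¹ (τ x)) = g x
      calc g (τ₀⁻¹ (τ x)) = f (τ₀ (τ₀⁻¹ (τ x))) := (hh _).symm
        _ = f (τ x) := by rw [Equiv.Perm.inv_def, Equiv.apply_symm_apply]
        _ = g x := congrFun hτ x
    · intro hτ
      funext x
      show f (τ x) = g x
      calc f (τ x) = f (τ₀ (τ₀⁻¹ (τ x))) := by rw [Equiv.Perm.inv_def, Equiv.apply_symm_apply]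
        _ = g (τ₀⁻¹ (τ x)) := hh _
        _ = g x := congrFun hτ x
  rw [← h1, h2]

end PermAux2

namespace PermAux3
open PermAux PermAux2

variable {n : ℕ}

noncomputable def Wkey (m : Multiset (Fin n)) : ℕ :=
  if h : ∃ f : Fin n → Fin n, key f = m then W h.choose else 0

lemma Wkey_key (f : Fin n → Fin n) : Wkey (key f) = W f := by
  have h : ∃ g : Fin n → Fin n, key g = key f := ⟨f, rfl⟩
  rw [Wkey, dif_pos h]
  exact W_congr h.choose_spec

noncomputable def T (U : Matrix (Fin n) (Fin n) ℂ) (m : Multiset (Fin n)) : ℂ :=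
  ∑ g ∈ Finset.univ.filter (fun g : Fin n → Fin n => key g = m), v U g

lemma sum_perm_comp (U : Matrix (Fin n) (Fin n) ℂ) (f : Fin n → Fin n) :
    ∑ τ : Equiv.Perm (Fin n), v U (f ∘ ⇑τ) = (W f : ℂ) * T U (key f) := by
  rw [Finset.sum_comp (v U) (fun τ : Equiv.Perm (Fin n) => f ∘ ⇑τ)]
  have himg : (Finset.univ.image fun τ : Equiv.Perm (Fin n) => f ∘ ⇑τ)
      = Finset.univ.filter (fun g : Fin n → Fin n => key g = key f) := by
    ext g
    simp only [Finset.mem_image, Finset.mem_univ, true_and, Finset.mem_filter]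
    constructor
    · rintro ⟨τ, rfl⟩; exact key_comp_perm f τ
    · intro h; exact key_eq_iff.mp h.symm
  rw [himg, T, Finset.mul_sum]
  apply Finset.sum_congr rfl
  intro g hg
  simp only [Finset.mem_filter, Finset.mem_univ, true_and] at hg
  obtain ⟨τ₀, hτ₀⟩ := key_eq_iff.mp hg.symm
  rw [card_fiber τ₀ hτ₀, nsmul_eq_mul]

lemma perm_eq_sum_v (U : Matrix (Fin n) (Fin n) ℂ) :
    U.permanent = ∑ σ : Equiv.Perm (Fin n), v U ⇑σ := by
  rw [Matrix.permanent,
    ← Equiv.sum_comp (Equiv.inv (Equiv.Perm (Fin n))) (fun σ : Equiv.Perm (Fin n) => v U ⇑σ)]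
  apply Finset.sum_congr rfl
  intro σ _
  show ∏ i, U (σ i) i = v U ⇑σ⁻¹
  rw [v, ← Equiv.prod_comp σ (fun j => U j (σ⁻¹ j))]
  apply Finset.prod_congr rfl
  intro i _
  rw [Equiv.Perm.inv_def, Equiv.symm_apply_apply]

lemma perm_mul_conjTranspose (U : Matrix (Fin n) (Fin n) ℂ) :
    (U * Uᴴ).permanent = ∑ f : Fin n → Fin n, ∑ τ : Equiv.Perm (Fin n),
      v U (f ∘ ⇑τ) * star (v U f) := by
  rw [Matrix.permanent]
  have step1 : ∀ σ : Equiv.Perm (Fin n), ∏ i, (U * Uᴴ) (σ i) i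
      = ∑ f : Fin n → Fin n, v U (f ∘ ⇑σ⁻¹) * star (v U f) := by
    intro σ
    simp only [Matrix.mul_apply, Matrix.conjTranspose_apply]
    rw [Finset.prod_univ_sum]
    rw [Fintype.piFinset_univ]
    apply Finset.sum_congr rfl
    intro f _
    rw [Finset.prod_mul_distrib, ← star_prod]
    congr 1
    · rw [v, ← Equiv.prod_comp σ (fun j => U j ((f ∘ ⇑σ⁻¹) j))]
      apply Finset.prod_congr rfl
      intro i _
      show U (σ i) (f i) = U (σ i) (f (σ⁻¹ (σ i)))
      rw [Equiv.Perm.inv_def, Equiv.symm_apply_apply]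
  calc ∑ σ : Equiv.Perm (Fin n), ∏ i, (U * Uᴴ) (σ i) i
      = ∑ σ : Equiv.Perm (Fin n), ∑ f : Fin n → Fin n,
          v U (f ∘ ⇑σ⁻¹) * star (v U f) := Finset.sum_congr rfl (fun σ _ => step1 σ)
    _ = ∑ f : Fin n → Fin n, ∑ σ : Equiv.Perm (Fin n),
          v U (f ∘ ⇑σ⁻¹) * star (v U f) := Finset.sum_comm
    _ = ∑ f : Fin n → Fin n, ∑ τ : Equiv.Perm (Fin n),
          v U (f ∘ ⇑τ) * star (v U f) := by
        apply Finset.sum_congr rfl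
        intro f _
        exact Equiv.sum_comp (Equiv.inv (Equiv.Perm (Fin n)))
          (fun τ : Equiv.Perm (Fin n) => v U (f ∘ ⇑τ) * star (v U f))

lemma W_id : W (id : Fin n → Fin n) = 1 := by
  rw [W]
  have h : (Finset.univ.filter fun τ : Equiv.Perm (Fin n) => id ∘ ⇑τ = id) = {1} := by
    ext τ
    simp only [Finset.mem_filter, Finset.mem_univ, true_and, Finset.mem_singleton]
    constructor
    · intro h
      exact Equiv.ext fun x => by simpa using congrFun h x
    · rintro rfl
      funext x
      simp
  rw [h, Finset.card_singleton]

lemma key_id : key (id : Fin n → Fin n) = Finset.univ.val := by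
  rw [key, Multiset.map_id]

lemma T_univ_val (U : Matrix (Fin n) (Fin n) ℂ) :
    T U (Finset.univ.val) = U.permanent := by
  rw [T, perm_eq_sum_v]
  have hset : (Finset.univ.filter fun g : Fin n → Fin n => key g = Finset.univ.val)
      = Finset.univ.image (fun σ : Equiv.Perm (Fin n) => ⇑σ) := by
    ext g
    simp only [Finset.mem_filter, Finset.mem_univ, true_and, Finset.mem_image]
    constructor
    · intro h
      have h2 : key (id : Fin n → Fin n) = key g := by rw [key_id, h]
      obtain ⟨τ, hτ⟩ := key_eq_iff.mp h2
      have : ⇑τ = g := by simpa using hτ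
      exact ⟨τ, this⟩
    · rintro ⟨σ, rfl⟩
      have := key_comp_perm (id : Fin n → Fin n) σ
      rw [key_id] at this
      simpa using this
  rw [hset]
  rw [Finset.sum_image]
  intro σ _ π _ h
  exact Equiv.coe_fn_injective h

end PermAux3

open PermAux PermAux2 PermAux3 in
/-- The permanent of a unitary matrix has absolute value at most 1. -/
theorem abs_permanent_le_one_of_unitary {n : ℕ} (U : Matrix (Fin n) (Fin n) ℂ)
    (hU : U * Uᴴ = 1) :
    ‖U.permanent‖ ≤ 1 := by
  have h1 : (1 : ℂ) = ∑ f : Fin n → Fin n, ∑ τ : Equiv.Perm (Fin n),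
      v U (f ∘ ⇑τ) * star (v U f) := by
    rw [← perm_mul_conjTranspose U, hU, Matrix.permanent_one]
  have h2 : (1 : ℂ) = ∑ f : Fin n → Fin n,
      ((Wkey (key f) : ℂ) * T U (key f)) * star (v U f) := by
    rw [h1]
    apply Finset.sum_congr rfl
    intro f _
    rw [← Finset.sum_mul, sum_perm_comp, Wkey_key]
  have h3 : (1 : ℂ) = ∑ m ∈ Finset.univ.image (key (n := n)),
      (Wkey m : ℂ) * (T U m * star (T U m)) := by
    rw [h2, ← Finset.sum_fiberwise_of_maps_to
      (fun f _ => Finset.mem_image_of_mem (key (n := n)) (Finset.mem_univ f))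
      (fun f => ((Wkey (key f) : ℂ) * T U (key f)) * star (v U f))]
    apply Finset.sum_congr rfl
    intro m hm
    calc ∑ f ∈ Finset.univ.filter (fun f : Fin n → Fin n => key f = m),
          ((Wkey (key f) : ℂ) * T U (key f)) * star (v U f)
        = ∑ f ∈ Finset.univ.filter (fun f : Fin n → Fin n => key f = m),
          ((Wkey m : ℂ) * T U m) * star (v U f) := by
          apply Finset.sum_congr rfl
          intro f hf
          rw [(Finset.mem_filter.mp hf).2]
      _ = ((Wkey m : ℂ) * T U m) * star (T U m) := by
          rw [← Finset.mul_sum, T, ← star_sum]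
      _ = (Wkey m : ℂ) * (T U m * star (T U m)) := by ring
  have h4 : (1 : ℝ) = ∑ m ∈ Finset.univ.image (key (n := n)),
      (Wkey m : ℝ) * Complex.normSq (T U m) := by
    have : ∀ m, (Wkey m : ℂ) * (T U m * star (T U m))
        = (((Wkey m : ℝ) * Complex.normSq (T U m) : ℝ) : ℂ) := by
      intro m
      rw [show star (T U m) = (starRingEnd ℂ) (T U m) from rfl, Complex.mul_conj]
      push_cast
      ring
    rw [Finset.sum_congr rfl (fun m _ => this m)] at h3
    rw [← Complex.ofReal_sum] at h3
    exact_mod_cast h3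
  have hmem : (Finset.univ.val : Multiset (Fin n)) ∈ Finset.univ.image (key (n := n)) := by
    rw [← key_id]
    exact Finset.mem_image_of_mem _ (Finset.mem_univ _)
  have hle : (Wkey (Finset.univ.val : Multiset (Fin n)) : ℝ)
      * Complex.normSq (T U (Finset.univ.val)) ≤ 1 := by
    rw [h4]
    apply Finset.single_le_sum (f := fun m => (Wkey m : ℝ) * Complex.normSq (T U m))
      (fun m _ => mul_nonneg (Nat.cast_nonneg _) (Complex.normSq_nonneg _)) hmem
  rw [T_univ_val] at hle
  have hW : Wkey (Finset.univ.val : Multiset (Fin n)) = 1 := by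
    rw [← key_id, Wkey_key, W_id]
  rw [hW] at hle
  simp only [Nat.cast_one, one_mul] at hle
  have habs : ‖U.permanent‖ ^ 2 ≤ 1 := by
    rw [Complex.sq_norm]; exact hle
  nlinarith [norm_nonneg U.permanent]
end

section
/- For every positive integer n, |perm(S_n)| ≤ n^{n/2}, where S_n is the Schur matrix. -/
/-- The Schur matrix: `(S_n)_{jk} = e^{2πi jk/n}` for `0 ≤ j,k ≤ n-1`. -/
noncomputable def schurMatrix (n : ℕ) : Matrix (Fin n) (Fin n) ℂ :=
  Matrix.of fun j k : Fin n =>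
    Complex.exp (2 * (Real.pi : ℂ) * Complex.I * ((j : ℕ) : ℂ) * ((k : ℕ) : ℂ) / (n : ℂ))

open Finset in
/-- `|perm(S_n)| ≤ n^{n/2}` for the Schur matrix `S_n`. -/
theorem abs_permanent_schur_le (n : ℕ) (hn : 0 < n) :
    ‖(schurMatrix n).permanent‖ ≤ (n : ℝ) ^ ((n : ℝ) / 2) := by
  classical
  set A := schurMatrix n with hAdef
  set e : ℂ := Complex.exp (2 * (Real.pi : ℂ) * Complex.I / n) with he
  have hprim : IsPrimitiveRoot e n := Complex.isPrimitiveRoot_exp n hn.ne'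
  have hne : e ≠ 0 := Complex.exp_ne_zero _
  have hA : ∀ j k : Fin n, A j k = e ^ ((j : ℕ) * (k : ℕ)) := by
    intro j k
    show Complex.exp _ = _
    rw [he, ← Complex.exp_nat_mul]
    congr 1
    push_cast
    ring
  have hconj : (starRingEnd ℂ) e = e⁻¹ := by
    rw [he, ← Complex.exp_conj, ← Complex.exp_neg]
    congr 1
    simp only [map_div₀, map_mul, Complex.conj_I, Complex.conj_ofReal, map_ofNat,
      Complex.conj_natCast]
    ring
  -- orthogonality of rows
  have hcol : ∀ j j' : Fin n,
      ∑ k : Fin n, A j k * (starRingEnd ℂ) (A j' k) = if j = j' then (n : ℂ) else 0 := by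
    intro j j'
    have hterm : ∀ k : Fin n, A j k * (starRingEnd ℂ) (A j' k)
        = (e ^ ((j : ℤ) - (j' : ℤ))) ^ (k : ℕ) := by
      intro k
      rw [hA, hA, map_pow, hconj, ← zpow_natCast e, ← zpow_natCast e⁻¹, inv_zpow,
        ← zpow_neg, ← zpow_add₀ hne, ← zpow_natCast (e ^ ((j : ℤ) - (j' : ℤ))), ← zpow_mul]
      congr 1
      push_cast
      ring
    simp only [hterm]
    rw [Fin.sum_univ_eq_sum_range (fun k => (e ^ ((j : ℤ) - (j' : ℤ))) ^ k) n]
    by_cases h : j = j'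
    · subst h
      simp
    · rw [if_neg h]
      have hjj : ((j : ℕ) : ℤ) ≠ ((j' : ℕ) : ℤ) := by
        simp only [Ne, Int.natCast_inj]
        exact fun hEq => h (Fin.ext hEq)
      have hd : ((j : ℤ) - (j' : ℤ)) ≠ 0 := sub_ne_zero.mpr hjj
      have hx1 : e ^ ((j : ℤ) - (j' : ℤ)) ≠ 1 := by
        rw [Ne, hprim.zpow_eq_one_iff_dvd]
        intro hdvd
        have h1 : (n : ℤ) ≤ |(j : ℤ) - (j' : ℤ)| :=
          Int.le_of_dvd (abs_pos.mpr hd) ((dvd_abs _ _).mpr hdvd)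
        have hj := j.isLt
        have hj' := j'.isLt
        have h2 : |(j : ℤ) - (j' : ℤ)| < n := by
          rw [abs_lt]
          omega
        linarith
      have hxn : (e ^ ((j : ℤ) - (j' : ℤ))) ^ n = 1 := by
        rw [← zpow_natCast, ← zpow_mul, mul_comm, zpow_mul, zpow_natCast, hprim.pow_eq_one,
          one_zpow]
      rw [geom_sum_eq hx1, hxn]
      simp
  set v : (Fin n → Fin n) → ℂ := fun f => ∏ j, A j (f j) with hv
  -- the key orthogonality sum over all functions
  have hT : ∀ τ : Equiv.Perm (Fin n),
      ∑ g : Fin n → Fin n, v g * (starRingEnd ℂ) (v (g ∘ τ)) =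
        if τ = 1 then (n : ℂ) ^ n else 0 := by
    intro τ
    have hterm : ∀ g : Fin n → Fin n, v g * (starRingEnd ℂ) (v (g ∘ τ))
        = ∏ j, (A j (g j) * (starRingEnd ℂ) (A (τ.symm j) (g j))) := by
      intro g
      have h2 : (starRingEnd ℂ) (v (g ∘ τ)) =
          ∏ j, (starRingEnd ℂ) (A (τ.symm j) (g j)) := by
        rw [hv]
        simp only [Function.comp]
        rw [map_prod]
        rw [← Equiv.prod_comp τ (fun j => (starRingEnd ℂ) (A (τ.symm j) (g j)))]
        simp
      rw [hv, h2, ← Finset.prod_mul_distrib]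
    simp only [hterm]
    have hps := Finset.prod_univ_sum (fun _ : Fin n => (Finset.univ : Finset (Fin n)))
      (fun j k => A j k * (starRingEnd ℂ) (A (τ.symm j) k))
    rw [Fintype.piFinset_univ] at hps
    rw [← hps]
    have : ∀ j : Fin n, ∑ k : Fin n, A j k * (starRingEnd ℂ) (A (τ.symm j) k)
        = if j = τ.symm j then (n : ℂ) else 0 := fun j => hcol j (τ.symm j)
    simp only [this]
    by_cases hτ : τ = 1
    · subst hτ
      simp [Finset.card_univ, Equiv.Perm.one_symm]
    · obtain ⟨i, hi⟩ : ∃ i, τ i ≠ i := by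
        by_contra hcon
        push_neg at hcon
        exact hτ (Equiv.ext hcon)
      rw [if_neg hτ]
      refine Finset.prod_eq_zero (Finset.mem_univ (τ i)) ?_
      rw [Equiv.symm_apply_apply, if_neg hi]
  -- permanent as a sum of v over permutations
  have hsymm : ∀ j k : Fin n, A j k = A k j := by
    intro j k
    rw [hA, hA, mul_comm]
  have hP : A.permanent = ∑ σ : Equiv.Perm (Fin n), v ⇑σ := by
    rw [Matrix.permanent]
    refine Finset.sum_congr rfl fun σ _ => ?_
    exact Finset.prod_congr rfl fun i _ => hsymm (σ i) i
  set P := A.permanent with hPdef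
  set w : (Fin n → Fin n) → ℂ := fun f => ∑ π : Equiv.Perm (Fin n), v (f ∘ ⇑π) with hw
  have hwP : ∀ σ : Equiv.Perm (Fin n), w ⇑σ = P := by
    intro σ
    rw [hw, hP]
    simp only
    calc ∑ π : Equiv.Perm (Fin n), v (⇑σ ∘ ⇑π)
        = ∑ π : Equiv.Perm (Fin n), v ⇑(σ * π) := by
          refine Finset.sum_congr rfl fun π _ => ?_
          rw [Equiv.Perm.coe_mul]
      _ = ∑ ρ : Equiv.Perm (Fin n), v ⇑ρ :=
          Fintype.sum_equiv (Equiv.mulLeft σ) _ _ (fun π => rfl)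
  -- the second moment computation
  have inner : ∀ π ρ : Equiv.Perm (Fin n),
      ∑ f : Fin n → Fin n, v (f ∘ ⇑π) * (starRingEnd ℂ) (v (f ∘ ⇑ρ)) =
        if ρ = π then (n : ℂ) ^ n else 0 := by
    intro π ρ
    have hre : ∑ f : Fin n → Fin n, v (f ∘ ⇑π) * (starRingEnd ℂ) (v (f ∘ ⇑ρ))
        = ∑ g : Fin n → Fin n, v g * (starRingEnd ℂ) (v (g ∘ ⇑(π⁻¹ * ρ))) := by
      refine Fintype.sum_equiv (Equiv.arrowCongr π.symm (Equiv.refl (Fin n))) _ _ fun f => ?_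
      have h1 : (Equiv.arrowCongr π.symm (Equiv.refl (Fin n))) f = f ∘ ⇑π := by
        funext i
        simp [Equiv.arrowCongr]
      rw [h1]
      have h2 : (f ∘ ⇑π) ∘ ⇑(π⁻¹ * ρ) = f ∘ ⇑ρ := by
        funext i
        simp [Equiv.Perm.mul_apply]
      rw [h2]
    rw [hre, hT]
    congr 1
    simp [inv_mul_eq_one, eq_comm]
  have key2 : ∑ f : Fin n → Fin n, w f * (starRingEnd ℂ) (w f)
      = (n.factorial : ℂ) * (n : ℂ) ^ n := by
    have hww : ∀ f : Fin n → Fin n, w f * (starRingEnd ℂ) (w f)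
        = ∑ π : Equiv.Perm (Fin n), ∑ ρ : Equiv.Perm (Fin n),
            v (f ∘ ⇑π) * (starRingEnd ℂ) (v (f ∘ ⇑ρ)) := by
      intro f
      rw [hw]
      simp only
      rw [map_sum, Finset.sum_mul_sum]
    simp only [hww]
    rw [Finset.sum_comm]
    have : ∀ π : Equiv.Perm (Fin n),
        ∑ f : Fin n → Fin n, ∑ ρ : Equiv.Perm (Fin n),
          v (f ∘ ⇑π) * (starRingEnd ℂ) (v (f ∘ ⇑ρ)) = (n : ℂ) ^ n := by
      intro π
      rw [Finset.sum_comm]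
      simp only [inner]
      simp
    simp only [this]
    simp [Finset.card_univ, Fintype.card_perm, mul_comm]
  -- move to real norms
  have key2' : ∑ f : Fin n → Fin n, Complex.normSq (w f) = (n.factorial : ℝ) * (n : ℝ) ^ n := by
    have hcast : ((∑ f : Fin n → Fin n, Complex.normSq (w f) : ℝ) : ℂ)
        = ((n.factorial : ℝ) * (n : ℝ) ^ n : ℝ) := by
      push_cast
      rw [← key2]
      exact Finset.sum_congr rfl fun f _ => Complex.mul_conj _ |>.symm
    exact_mod_cast hcast
  have key1 : ∑ σ : Equiv.Perm (Fin n), Complex.normSq (w ⇑σ)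
      = (n.factorial : ℝ) * Complex.normSq P := by
    simp only [hwP]
    simp [Finset.card_univ, Fintype.card_perm, mul_comm]
  have hmono : ∑ σ : Equiv.Perm (Fin n), Complex.normSq (w ⇑σ)
      ≤ ∑ f : Fin n → Fin n, Complex.normSq (w f) := by
    have himg : ∑ f ∈ Finset.image (fun σ : Equiv.Perm (Fin n) => ⇑σ) Finset.univ,
        Complex.normSq (w f) = ∑ σ : Equiv.Perm (Fin n), Complex.normSq (w ⇑σ) :=
      Finset.sum_image (fun σ _ τ _ h => Equiv.coe_fn_injective h)
    rw [← himg]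
    exact Finset.sum_le_sum_of_subset_of_nonneg (Finset.subset_univ _)
      fun f _ _ => Complex.normSq_nonneg _
  have hfact : (0 : ℝ) < (n.factorial : ℝ) := by
    exact_mod_cast Nat.factorial_pos n
  have hns : Complex.normSq P ≤ (n : ℝ) ^ n := by
    rw [key1, key2'] at hmono
    exact le_of_mul_le_mul_left hmono hfact
  have habs : ‖P‖ ≤ Real.sqrt ((n : ℝ) ^ n) := by
    rw [Complex.norm_def]
    exact Real.sqrt_le_sqrt hns
  refine habs.trans_eq ?_
  rw [Real.sqrt_eq_rpow, ← Real.rpow_natCast (n : ℝ) n, ← Real.rpow_mul (Nat.cast_nonneg n)]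
  congr 1
  ring
end

section
/- For every positive integer n, the permanent perm(S_n) of the Schur matrix is a rational integer, i.e., perm(S_n) ∈ ℤ (as a complex number it is an integer). -/
open Polynomial Finset in
/-- The permanent of the Schur matrix is a rational integer. -/
theorem permanent_schur_int (n : ℕ) (hn : 0 < n) :
    ∃ m : ℤ, (schurMatrix n).permanent = (m : ℂ) := by
  haveI : NeZero n := ⟨hn.ne'⟩
  lift n to ℕ+ using hn with n' hn'
  set n : ℕ := (n' : ℕ) with hndef
  have hζ : IsPrimitiveRoot (@IsCyclotomicExtension.zeta n' _ ℚ (CyclotomicField n' ℚ) _ _ _ (CyclotomicField.isCyclotomicExtension n' ℚ)) (n' : ℕ) :=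
    @IsCyclotomicExtension.zeta_spec n' _ ℚ (CyclotomicField n' ℚ) _ _ _ (CyclotomicField.isCyclotomicExtension n' ℚ)
  set ζ : CyclotomicField n' ℚ := @IsCyclotomicExtension.zeta n' _ ℚ (CyclotomicField n' ℚ) _ _ _ (CyclotomicField.isCyclotomicExtension n' ℚ) with hζdef
  have hn : 0 < n := n'.pos
  -- periodicity of powers
  have hpow : ∀ a : ℕ, ζ ^ a = ζ ^ (a % n) := by
    intro a
    conv_lhs => rw [← Nat.div_add_mod a n]
    rw [pow_add, pow_mul, hζ.pow_eq_one, one_pow, one_mul]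
  -- the element in K
  set x : CyclotomicField n' ℚ := ∑ σ : Equiv.Perm (Fin n), ∏ i : Fin n, ζ ^ ((σ i : ℕ) * (i : ℕ)) with hx
  -- x is fixed by every automorphism
  have hfix : ∀ g : CyclotomicField n' ℚ ≃ₐ[ℚ] CyclotomicField n' ℚ, g x = x := by
    intro g
    have hgζ : IsPrimitiveRoot (g ζ) n := hζ.map_of_injective g.injective
    obtain ⟨t, htn, ht⟩ := hζ.eq_pow_of_pow_eq_one hgζ.pow_eq_one
    have htcop : t.Coprime n := (hζ.pow_iff_coprime hn t).mp (ht ▸ hgζ)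
    -- the multiplication-by-t permutation of `Fin n`
    have hftlt : ∀ a : Fin n, t * (a : ℕ) % n < n := fun a => Nat.mod_lt _ hn
    set f : Fin n → Fin n := fun a => ⟨t * (a : ℕ) % n, hftlt a⟩ with hf
    have hinj : Function.Injective f := by
      intro a b hab
      have h1 : t * (a : ℕ) ≡ t * (b : ℕ) [MOD n] := by
        simpa [Nat.ModEq, hf] using congrArg (Fin.val) hab
      have h2 : (a : ℕ) ≡ (b : ℕ) [MOD n] :=
        Nat.ModEq.cancel_left_of_coprime (by simpa [Nat.coprime_comm] using htcop) h1
      have := h2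
      rw [Nat.ModEq, Nat.mod_eq_of_lt a.isLt, Nat.mod_eq_of_lt b.isLt] at this
      exact Fin.ext this
    set π : Equiv.Perm (Fin n) := Equiv.ofBijective f (Finite.injective_iff_bijective.mp hinj)
    have hπ : ∀ a : Fin n, ((π a : ℕ)) = t * (a : ℕ) % n := fun a => rfl
    have key : ∀ (a i : Fin n), ζ ^ ((π a : ℕ) * (i : ℕ)) = (g ζ) ^ ((a : ℕ) * (i : ℕ)) := by
      intro a i
      rw [← ht, ← pow_mul, hπ, hpow ((t * (a : ℕ) % n) * (i : ℕ)), hpow (t * ((a : ℕ) * (i : ℕ)))]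
      congr 1
      have : (t * (a : ℕ) % n) * (i : ℕ) ≡ t * ((a : ℕ) * (i : ℕ)) [MOD n] := by
        have := (Nat.mod_modEq (t * (a : ℕ)) n).mul_right (i : ℕ)
        simpa [mul_assoc] using this
      exact this
    calc g x = ∑ σ : Equiv.Perm (Fin n), ∏ i : Fin n, (g ζ) ^ ((σ i : ℕ) * (i : ℕ)) := by
            simp [hx, map_sum, map_prod, map_pow]
      _ = ∑ σ : Equiv.Perm (Fin n), ∏ i : Fin n, ζ ^ (((π * σ) i : ℕ) * (i : ℕ)) := by
            refine Finset.sum_congr rfl fun σ _ => Finset.prod_congr rfl fun i _ => ?_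
            rw [Equiv.Perm.mul_apply, key]
      _ = x := by
            rw [hx]
            exact Equiv.sum_comp (Equiv.mulLeft π)
              (fun σ => ∏ i : Fin n, ζ ^ ((σ i : ℕ) * (i : ℕ)))
  -- hence x comes from ℚ
  haveI : IsCyclotomicExtension {(n' : ℕ)} ℚ (CyclotomicField n' ℚ) :=
    CyclotomicField.isCyclotomicExtension n' ℚ
  haveI : FiniteDimensional ℚ (CyclotomicField n' ℚ) := IsCyclotomicExtension.finiteDimensional {(n' : ℕ)} ℚ _
  haveI : IsGalois ℚ (CyclotomicField n' ℚ) := IsCyclotomicExtension.isGalois {(n' : ℕ)} ℚ _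
  have hxbot : x ∈ (⊥ : IntermediateField ℚ (CyclotomicField n' ℚ)) := by
    rw [← IsGalois.fixedField_fixingSubgroup (⊥ : IntermediateField ℚ (CyclotomicField n' ℚ))]
    exact fun g => hfix g
  obtain ⟨q, hq⟩ := IntermediateField.mem_bot.mp hxbot
  -- x is integral over ℤ
  have hζint : IsIntegral ℤ ζ := hζ.isIntegral hn
  have hxint : IsIntegral ℤ x := by
    have : x ∈ integralClosure ℤ (CyclotomicField n' ℚ) := by
      refine Subalgebra.sum_mem _ fun σ _ => Subalgebra.prod_mem _ fun i _ => ?_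
      exact Subalgebra.pow_mem _ hζint _
    exact this
  -- hence q is an integer
  have hqint : IsIntegral ℤ q := by
    rw [← isIntegral_algebraMap_iff (algebraMap ℚ (CyclotomicField n' ℚ)).injective]
    rw [hq]; exact hxint
  obtain ⟨m, hm⟩ := IsIntegrallyClosed.isIntegral_iff.mp hqint
  -- the embedding into ℂ
  set ζℂ : ℂ := Complex.exp (2 * (Real.pi : ℂ) * Complex.I / (n : ℂ)) with hζℂdef
  have hζℂ : IsPrimitiveRoot ζℂ n := Complex.isPrimitiveRoot_exp n hn.ne'
  have hζ' : IsPrimitiveRoot ζ ((n' : ℕ+) : ℕ) := hζ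
  have hroot : (aeval ζℂ) (minpoly ℚ ((hζ'.powerBasis ℚ).gen)) = 0 := by
    rw [IsPrimitiveRoot.powerBasis_gen ℚ hζ', ← cyclotomic_eq_minpoly_rat hζ hn]
    rw [aeval_def, eval₂_eq_eval_map, map_cyclotomic]
    exact (hζℂ.isRoot_cyclotomic hn).eq_zero
  set φ : CyclotomicField n' ℚ →ₐ[ℚ] ℂ := (hζ'.powerBasis ℚ).lift ζℂ hroot with hφ
  have hφζ : φ ζ = ζℂ := by
    have := (hζ'.powerBasis ℚ).lift_gen ζℂ hroot
    rwa [IsPrimitiveRoot.powerBasis_gen ℚ hζ'] at this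
  -- compute the permanent
  refine ⟨m, ?_⟩
  have hperm : (schurMatrix n).permanent
      = ∑ σ : Equiv.Perm (Fin n), ∏ i : Fin n, ζℂ ^ ((σ i : ℕ) * (i : ℕ)) := by
    unfold Matrix.permanent schurMatrix
    refine Finset.sum_congr rfl fun σ _ => Finset.prod_congr rfl fun i _ => ?_
    rw [Matrix.of_apply, hζℂdef, ← Complex.exp_nat_mul]
    congr 1
    push_cast
    ring
  have hφx : φ x = (schurMatrix n).permanent := by
    rw [hperm, hx, map_sum]
    refine Finset.sum_congr rfl fun σ _ => ?_
    rw [map_prod]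
    exact Finset.prod_congr rfl fun i _ => by rw [map_pow, hφζ]
  rw [← hn']
  rw [← hφx, ← hq, AlgHom.commutes, ← hm]
  simp
end
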